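/- Let q ∈ ℂ with q^{2k} ≠ 1 for 1 ≤ k ≤ ℓ, and let F = Σ_{j=1}^{ℓ} I^{⊗(j−1)} ⊗ σ⁻ ⊗ (K^{−1})^{⊗(ℓ−j)} on (ℂ²)^{⊗ℓ}, where σ⁻ = [[0,0],[1,0]] and K = [[q,0],[0,q^{−1}]] (F is the (ℓ−1)-fold coproduct Δ^{(ℓ−1)}(X⁻) of U_q(sl₂) in the spin-1/2 tensor representation). Then for every 0 ≤ n ≤ ℓ, F^{n} v_∅ = [n]_q! · Σ_{S ⊆ {1,…,ℓ}, |S|=n} q^{Σ(S) − nℓ + n(n−1)/2} v_S; that is, F^{n} v_∅ / [n]_q! equals the ket ||ℓ,n⟩. -/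

import Mathlib

open Matrix Complex Finset Filter

noncomputable section

/-- q-integer `[n]_q = (q^n - q^{-n})/(q - q⁻¹)`. -/
def qint (q : ℂ) (n : ℕ) : ℂ := (q ^ n - q⁻¹ ^ n) / (q - q⁻¹)

/-- q-factorial `[n]_q!`. -/
def qfact (q : ℂ) (n : ℕ) : ℂ := ∏ k ∈ Finset.range n, qint q (k + 1)

/-- q-binomial coefficient `[m ¦ n]_q`. -/
def qbinom (q : ℂ) (m n : ℕ) : ℂ := qfact q m / (qfact q (m - n) * qfact q n)

/-- The set of positions where the configuration `c` equals `1`. -/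
def oneSet {m : ℕ} (c : Fin m → Fin 2) : Finset (Fin m) :=
  Finset.univ.filter fun i => c i = 1

/-- The exponent `Σ(S) − n m + n(n−1)/2` (positions counted `1,…,m`). -/
def expKet (m n : ℕ) (S : Finset (Fin m)) : ℤ :=
  (∑ i ∈ S, ((i : ℤ) + 1)) - (n : ℤ) * (m : ℤ) + ((n * (n - 1) / 2 : ℕ) : ℤ)

/-- Coefficients of the ket `||m, n⟩` in the standard basis. -/
def ketCoef (q : ℂ) (m n : ℕ) (c : Fin m → Fin 2) : ℂ :=
  if (oneSet c).card = n then q ^ expKet m n (oneSet c) else 0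

/-- Coefficients of the bra `⟨m, n||` in the standard (bilinear) dual basis. -/
def braCoef (q : ℂ) (m n : ℕ) (c : Fin m → Fin 2) : ℂ :=
  (qbinom q m n)⁻¹ * q ^ ((n : ℤ) * ((m : ℤ) - (n : ℤ))) * ketCoef q m n c

/-- Coefficients of the tilde bra `~⟨m, n||`. -/
def tbraCoef (q : ℂ) (m n : ℕ) (c : Fin m → Fin 2) : ℂ :=
  ((m.choose n : ℂ))⁻¹ *
    (if (oneSet c).card = n then q ^ (-(expKet m n (oneSet c))) else 0)

/-- Coefficients of the tilde ket `~||m, n⟩`. -/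
def tketCoef (q : ℂ) (m n : ℕ) (c : Fin m → Fin 2) : ℂ :=
  qbinom q m n * q ^ (-((n : ℤ) * ((m : ℤ) - (n : ℤ)))) * ((m.choose n : ℂ))⁻¹ *
    (if (oneSet c).card = n then q ^ (-(expKet m n (oneSet c))) else 0)


/-- The basis vector `v_S` of `(ℂ²)^{⊗m}` with `e₁` at the positions of `S`
and `e₀` elsewhere. -/
def vS {m : ℕ} (S : Finset (Fin m)) : (Fin m → Fin 2) → ℂ :=
  fun c => if c = (fun i => if i ∈ S then (1 : Fin 2) else 0) then 1 else 0

/-- The coproduct operator `F = Δ^{(m−1)}(X⁻) = Σ_j I^{⊗(j−1)} ⊗ σ⁻ ⊗ (K⁻¹)^{⊗(m−j)}`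
on `(ℂ²)^{⊗m}`. -/
def Fop (q : ℂ) (m : ℕ) : Matrix (Fin m → Fin 2) (Fin m → Fin 2) ℂ :=
  Matrix.of fun a b => ∑ j : Fin m, ∏ i : Fin m,
    if i < j then (if a i = b i then 1 else 0)
    else if i = j then (if a i = 1 ∧ b i = 0 then 1 else 0)
    else (if a i = b i then (if a i = 0 then q⁻¹ else q) else 0)

namespace Statement6Aux

lemma fin2_eq_zero_of_ne_one {x : Fin 2} (h : x ≠ 1) : x = 0 := by
  fin_cases x <;> simp_all

lemma oneSet_indicator {m : ℕ} (S : Finset (Fin m)) :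
    oneSet (fun i => if i ∈ S then (1 : Fin 2) else 0) = S := by
  ext i; simp [oneSet]

lemma indicator_oneSet {m : ℕ} (a : Fin m → Fin 2) :
    (fun i => if i ∈ oneSet a then (1 : Fin 2) else 0) = a := by
  funext i
  by_cases h : a i = 1
  · simp [oneSet, h]
  · simp [oneSet, h, (fin2_eq_zero_of_ne_one h).symm]

lemma rhs_eq (q : ℂ) (m n : ℕ) :
    (∑ S ∈ Finset.powersetCard n (Finset.univ : Finset (Fin m)),
        q ^ expKet m n S • vS S) = ketCoef q m n := by
  funext a
  simp only [Finset.sum_apply, Pi.smul_apply, vS, smul_eq_mul, ketCoef]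
  by_cases h : (oneSet a).card = n
  · rw [if_pos h, Finset.sum_eq_single (oneSet a)]
    · rw [if_pos (indicator_oneSet a).symm, mul_one]
    · intro S hS hne
      rw [if_neg, mul_zero]
      intro hc
      exact hne (by rw [hc, oneSet_indicator])
    · intro hmem
      exact absurd (Finset.mem_powersetCard_univ.mpr h) hmem
  · rw [if_neg h]
    apply Finset.sum_eq_zero
    intro S hS
    rw [if_neg, mul_zero]
    intro hc
    exact h (by rw [hc, oneSet_indicator, (Finset.mem_powersetCard_univ.mp hS)])

/-- single factor of the Fop product -/
def fac (q : ℂ) {m : ℕ} (a b : Fin m → Fin 2) (j i : Fin m) : ℂ :=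
  if i < j then (if a i = b i then 1 else 0)
  else if i = j then (if a i = 1 ∧ b i = 0 then 1 else 0)
  else (if a i = b i then (if a i = 0 then q⁻¹ else q) else 0)

lemma Fop_apply (q : ℂ) {m : ℕ} (a b : Fin m → Fin 2) :
    Fop q m a b = ∑ j : Fin m, ∏ i : Fin m, fac q a b j i := rfl

lemma prod_fac (q : ℂ) {m : ℕ} (a b : Fin m → Fin 2) (j : Fin m) :
    (∏ i : Fin m, fac q a b j i) =
    if a j = 1 ∧ b = Function.update a j 0 then
      ∏ i ∈ Finset.Ioi j, (if a i = 0 then q⁻¹ else q) else 0 := by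
  by_cases hj : a j = 1 ∧ b = Function.update a j 0
  · rw [if_pos hj]
    obtain ⟨h1, h2⟩ := hj
    rw [← Finset.prod_filter_mul_prod_filter_not Finset.univ (fun i => j < i)]
    have hIoi : Finset.univ.filter (fun i => j < i) = Finset.Ioi j := by
      ext i; simp
    rw [hIoi]
    have e1 : ∀ i ∈ Finset.Ioi j, fac q a b j i = (if a i = 0 then q⁻¹ else q) := by
      intro i hi
      rw [Finset.mem_Ioi] at hi
      have hne : i ≠ j := ne_of_gt hi
      have hb : b i = a i := by rw [h2, Function.update_of_ne hne]
      simp [fac, not_lt_of_gt hi, hne, hb]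
    have e2 : ∀ i ∈ Finset.univ.filter (fun i => ¬ j < i), fac q a b j i = 1 := by
      intro i hi
      simp only [Finset.mem_filter] at hi
      rcases lt_or_eq_of_le (le_of_not_gt hi.2) with hlt | heq
      · have hb : b i = a i := by rw [h2, Function.update_of_ne (ne_of_lt hlt)]
        simp [fac, hlt, hb]
      · have hbj : b i = 0 := by rw [heq, h2, Function.update_self]
        subst heq
        simp [fac, h1, hbj]
    rw [Finset.prod_congr rfl e1, Finset.prod_congr rfl e2, Finset.prod_const_one, mul_one]
  · rw [if_neg hj]
    rw [not_and_or] at hj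
    rcases hj with hj | hj
    · apply Finset.prod_eq_zero (Finset.mem_univ j)
      simp [fac, hj]
    · obtain ⟨i, hi⟩ := Function.ne_iff.mp hj
      by_cases hij : i = j
      · subst hij
        rw [Function.update_self] at hi
        apply Finset.prod_eq_zero (Finset.mem_univ i)
        simp [fac, hi]
      · rw [Function.update_of_ne hij] at hi
        apply Finset.prod_eq_zero (Finset.mem_univ i)
        rcases lt_trichotomy i j with h | h | h
        · simp only [fac, if_pos h]
          rw [if_neg (fun hc => hi hc.symm)]
        · exact absurd h hij
        · simp only [fac, if_neg (not_lt_of_gt h), if_neg (ne_of_gt h)]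
          rw [if_neg (fun hc => hi hc.symm)]

lemma Fop_mulVec (q : ℂ) {m : ℕ} (v : (Fin m → Fin 2) → ℂ) (a : Fin m → Fin 2) :
    (Fop q m).mulVec v a =
      ∑ j ∈ oneSet a,
        (∏ i ∈ Finset.Ioi j, (if a i = 0 then q⁻¹ else q)) * v (Function.update a j 0) := by
  unfold Matrix.mulVec dotProduct
  simp only [Fop_apply, prod_fac, Finset.sum_mul]
  rw [Finset.sum_comm]
  rw [oneSet, Finset.sum_filter]
  apply Finset.sum_congr rfl
  intro j _
  by_cases hj : a j = 1
  · rw [if_pos hj]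
    rw [Finset.sum_congr rfl (fun b _ => by
      rw [show (if a j = 1 ∧ b = Function.update a j 0 then
        ∏ i ∈ Finset.Ioi j, (if a i = 0 then q⁻¹ else q) else 0) * v b =
        (if b = Function.update a j 0 then
          (∏ i ∈ Finset.Ioi j, (if a i = 0 then q⁻¹ else q)) * v b else 0) from by
            simp only [hj, true_and, ite_mul, zero_mul]])]
    rw [Finset.sum_ite_eq' Finset.univ (Function.update a j 0)
      (fun b => (∏ i ∈ Finset.Ioi j, (if a i = 0 then q⁻¹ else q)) * v b)]
    simp
  · rw [if_neg hj]
    apply Finset.sum_eq_zero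
    intro b _
    simp [hj]


lemma weight_eq {q : ℂ} (hq0 : q ≠ 0) {m : ℕ} (a : Fin m → Fin 2) (j : Fin m) :
    (∏ i ∈ Finset.Ioi j, (if a i = 0 then q⁻¹ else q)) =
      q ^ (2 * ((((oneSet a).filter (fun i => j < i)).card : ℤ)) - ((m : ℤ) - 1 - (j : ℤ))) := by
  rw [← Finset.prod_filter_mul_prod_filter_not (Finset.Ioi j) (fun i => a i = 1)]
  have e1 : ∀ i ∈ (Finset.Ioi j).filter (fun i => a i = 1),
      (if a i = 0 then q⁻¹ else q) = q := by
    intro i hi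
    simp only [Finset.mem_filter] at hi
    rw [if_neg (by rw [hi.2]; decide)]
  have e2 : ∀ i ∈ (Finset.Ioi j).filter (fun i => ¬ a i = 1),
      (if a i = 0 then q⁻¹ else q) = q⁻¹ := by
    intro i hi
    simp only [Finset.mem_filter] at hi
    rw [if_pos (fin2_eq_zero_of_ne_one hi.2)]
  rw [Finset.prod_congr rfl e1, Finset.prod_congr rfl e2,
    Finset.prod_const, Finset.prod_const]
  have hset : (Finset.Ioi j).filter (fun i => a i = 1)
      = (oneSet a).filter (fun i => j < i) := by
    ext i; simp [oneSet, Finset.mem_Ioi, and_comm]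
  set c1 := ((oneSet a).filter (fun i => j < i)).card with hc1
  set c0 := ((Finset.Ioi j).filter (fun i => ¬ a i = 1)).card with hc0
  have hcard : c1 + c0 = m - 1 - (j : ℕ) := by
    rw [hc1, ← hset, hc0, Finset.card_filter_add_card_filter_not, Fin.card_Ioi]
  rw [hset]
  have : (2 * (c1 : ℤ) - ((m : ℤ) - 1 - (j : ℤ))) = (c1 : ℤ) + (- (c0 : ℤ)) := by
    have hj : (j : ℕ) < m := j.isLt
    omega
  rw [this, zpow_add₀ hq0, zpow_natCast, _root_.zpow_neg, zpow_natCast, ← inv_pow]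

lemma sum_rank {m : ℕ} (S : Finset (Fin m)) :
    ∀ f : ℕ → ℂ, ∑ j ∈ S, f ((S.filter (fun i => j < i)).card)
      = ∑ k ∈ Finset.range S.card, f k := by
  induction S using Finset.induction_on_max with
  | empty => simp
  | insert a s ha ih =>
    intro f
    have hna : a ∉ s := fun h => absurd (ha a h) (lt_irrefl a)
    rw [Finset.sum_insert hna]
    have h1 : ((insert a s).filter (fun i => a < i)) = ∅ := by
      ext i
      simp only [Finset.mem_filter, Finset.mem_insert, Finset.notMem_empty, iff_false,
        not_and]
      rintro (rfl | hi) h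
      · exact absurd h (lt_irrefl _)
      · exact absurd h (not_lt_of_gt (ha i hi))
    have h2 : ∀ j ∈ s, ((insert a s).filter (fun i => j < i)).card
        = (s.filter (fun i => j < i)).card + 1 := by
      intro j hj
      rw [Finset.filter_insert, if_pos (ha j hj), Finset.card_insert_of_notMem
        (fun h => hna (Finset.mem_of_mem_filter a h))]
    rw [h1, Finset.sum_congr rfl (fun j hj => by rw [h2 j hj]),
      ih (fun k => f (k + 1)), Finset.card_insert_of_notMem hna,
      Finset.sum_range_succ']
    simp [add_comm]

lemma qint_succ {q : ℂ} (hq0 : q ≠ 0) (hq2 : q ^ 2 ≠ 1) (n : ℕ) :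
    (∑ k ∈ Finset.range (n + 1), (q ^ 2) ^ k) = qint q (n + 1) * q ^ n := by
  have hq21 : q ^ 2 - 1 ≠ 0 := sub_ne_zero.mpr hq2
  have h1 : q - q⁻¹ ≠ 0 := by
    have h : q - q⁻¹ = (q ^ 2 - 1) * q⁻¹ := by
      field_simp
    rw [h]
    exact mul_ne_zero hq21 (inv_ne_zero hq0)
  have h2 : qint q (n + 1) = (q ^ (2 * (n + 1)) - 1) / ((q ^ 2 - 1) * q ^ n) := by
    rw [qint, div_eq_div_iff h1 (mul_ne_zero hq21 (pow_ne_zero _ hq0))]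
    simp only [inv_pow]
    field_simp
    ring
  rw [h2, div_mul_eq_mul_div, geom_sum_eq hq2,
    div_eq_div_iff hq21 (mul_ne_zero hq21 (pow_ne_zero n hq0)), pow_mul]
  ring


lemma oneSet_update {m : ℕ} (a : Fin m → Fin 2) (j : Fin m) :
    oneSet (Function.update a j 0) = (oneSet a).erase j := by
  ext i
  by_cases h : i = j
  · subst h; simp [oneSet, Function.update_self]
  · simp [oneSet, Function.update_of_ne h, h]

lemma step_lem {q : ℂ} (hq0 : q ≠ 0) (hq2 : q ^ 2 ≠ 1) {m : ℕ} (n : ℕ) (a : Fin m → Fin 2) :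
    (∑ j ∈ oneSet a,
        (∏ i ∈ Finset.Ioi j, (if a i = 0 then q⁻¹ else q)) *
          ketCoef q m n (Function.update a j 0))
      = qint q (n + 1) * ketCoef q m (n + 1) a := by
  by_cases h : (oneSet a).card = n + 1
  · rw [ketCoef, if_pos h]
    have hterm : ∀ j ∈ oneSet a,
        (∏ i ∈ Finset.Ioi j, (if a i = 0 then q⁻¹ else q)) *
          ketCoef q m n (Function.update a j 0)
        = q ^ (expKet m (n + 1) (oneSet a)) * ((q ^ n)⁻¹ *
            (q ^ 2) ^ (((oneSet a).filter (fun i => j < i)).card)) := by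
      intro j hj
      have hcerase : ((oneSet a).erase j).card = n := by
        rw [Finset.card_erase_of_mem hj, h]
        rfl
      rw [ketCoef, oneSet_update, if_pos hcerase, weight_eq hq0, ← zpow_add₀ hq0]
      have hsum : ∑ i ∈ (oneSet a).erase j, ((i : ℤ) + 1)
          = (∑ i ∈ oneSet a, ((i : ℤ) + 1)) - ((j : ℤ) + 1) :=
        Finset.sum_erase_eq_sub hj
      have hT : (((n + 1) * ((n + 1) - 1) / 2 : ℕ) : ℤ)
          = ((n * (n - 1) / 2 : ℕ) : ℤ) + n := by
        rw [Nat.triangle_succ]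
        push_cast
        ring
      have hexp : 2 * ((((oneSet a).filter (fun i => j < i)).card : ℤ))
            - ((m : ℤ) - 1 - (j : ℤ)) + expKet m n ((oneSet a).erase j)
          = expKet m (n + 1) (oneSet a)
            + (2 * ((((oneSet a).filter (fun i => j < i)).card : ℤ)) - n) := by
        rw [expKet, expKet, hsum, hT]
        push_cast
        ring
      rw [hexp, zpow_add₀ hq0]
      congr 1
      rw [zpow_sub₀ hq0]
      have h2A : (2 * ((((oneSet a).filter (fun i => j < i)).card : ℤ)))
          = ((2 * ((oneSet a).filter (fun i => j < i)).card : ℕ) : ℤ) := by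
        push_cast
        ring
      rw [h2A, zpow_natCast, pow_mul, zpow_natCast, div_eq_mul_inv, mul_comm]
    rw [Finset.sum_congr rfl hterm, ← Finset.mul_sum, ← Finset.mul_sum,
      sum_rank (oneSet a) (fun k => (q ^ 2) ^ k), h, qint_succ hq0 hq2]
    have hc : (q ^ n)⁻¹ * (qint q (n + 1) * q ^ n) = qint q (n + 1) := by
      field_simp
    rw [hc]
    ring
  · rw [ketCoef, if_neg h, mul_zero]
    apply Finset.sum_eq_zero
    intro j hj
    rw [ketCoef, oneSet_update, if_neg, mul_zero]
    intro hc
    rw [Finset.card_erase_of_mem hj] at hc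
    have hpos := Finset.card_pos.mpr ⟨j, hj⟩
    omega

end Statement6Aux


open Statement6Aux

/-- `F^n v_∅ = [n]_q! Σ_{|S|=n} q^{Σ(S)−nm+n(n−1)/2} v_S`; i.e. `F^n v_∅ / [n]_q!`
is the ket `||m,n⟩`. -/
theorem statement6 (q : ℂ) (hq0 : q ≠ 0) (m : ℕ)
    (hq : ∀ k : ℕ, 1 ≤ k → k ≤ m → q ^ (2 * k) ≠ 1) (n : ℕ) (hn : n ≤ m) :
    (Fop q m ^ n).mulVec (vS (∅ : Finset (Fin m))) =
      qfact q n • ∑ S ∈ Finset.powersetCard n (Finset.univ : Finset (Fin m)),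
        q ^ expKet m n S • vS S := by
  induction n with
  | zero =>
    rw [pow_zero, Matrix.one_mulVec, qfact, Finset.range_zero, Finset.prod_empty, one_smul,
      Finset.powersetCard_zero, Finset.sum_singleton,
      show expKet m 0 ∅ = 0 from by simp [expKet], zpow_zero, one_smul]
  | succ n ih =>
    have hn' : n ≤ m := Nat.le_of_succ_le hn
    have hq2 : q ^ 2 ≠ 1 := by simpa using hq 1 le_rfl (by omega)
    rw [pow_succ', ← Matrix.mulVec_mulVec, ih hn', Matrix.mulVec_smul, rhs_eq, rhs_eq]
    funext a
    simp only [Pi.smul_apply, smul_eq_mul]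
    rw [Fop_mulVec, step_lem hq0 hq2]
    have hf : qfact q (n + 1) = qfact q n * qint q (n + 1) := Finset.prod_range_succ _ n
    rw [hf]
    ring
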